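/- Let F(r) = (1/8)(1 - r^2)^2, F̃(r) = min{F(r), M + r^2} with M = max_{z ∈ [-1,1]} F(z), and W(φ) = ∫_{-1}^{φ} √(2 F̃(r)) dr. Then for all φ_1, φ_2 ∈ [-1, 1] one has the quadratic lower bound (φ_1 - φ_2)^2 ≤ 8 |W(φ_1) - W(φ_2)|. -/
import Mathlib


open intervalIntegral

/-- Quadratic lower bound for `W(φ) = ∫_{-1}^{φ} √(2 F̃(r)) dr` on `[-1,1]`:
`(φ₁ - φ₂)^2 ≤ 8 |W(φ₁) - W(φ₂)|`. -/
theorem stmt_6 (F Ftilde W : ℝ → ℝ) (M : ℝ)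
    (hF : ∀ r, F r = (1/8) * (1 - r^2)^2)
    (hM : IsGreatest (F '' Set.Icc (-1:ℝ) 1) M)
    (hFt : ∀ r, Ftilde r = min (F r) (M + r^2))
    (hW : ∀ φ : ℝ, W φ = ∫ r in (-1:ℝ)..φ, Real.sqrt (2 * Ftilde r)) :
    ∀ φ₁ ∈ Set.Icc (-1:ℝ) 1, ∀ φ₂ ∈ Set.Icc (-1:ℝ) 1,
      (φ₁ - φ₂)^2 ≤ 8 * |W φ₁ - W φ₂| := by
  -- M = 1/8
  have hM8 : M = 1/8 := by
    obtain ⟨⟨z, hz, hzF⟩, hub⟩ := hM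
    have h1 : M ≤ 1/8 := by
      rw [← hzF, hF]
      obtain ⟨hz1, hz2⟩ := hz
      nlinarith [sq_nonneg z, mul_nonneg (by linarith : (0:ℝ) ≤ 1 + z) (by linarith : (0:ℝ) ≤ 1 - z), sq_nonneg (1 - z^2)]
    have h2 : (1:ℝ)/8 ≤ M := by
      have h0 : F 0 ≤ M := hub ⟨0, by norm_num, rfl⟩
      rw [hF] at h0; norm_num at h0; linarith
    linarith
  -- sqrt formula on [-1,1]
  have hsqrt : ∀ r ∈ Set.Icc (-1:ℝ) 1, Real.sqrt (2 * Ftilde r) = 1/2 - r^2/2 := by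
    intro r hr
    obtain ⟨hr1, hr2⟩ := hr
    have hr2' : r^2 ≤ 1 := by nlinarith
    have hFle : F r ≤ M + r^2 := by
      rw [hF, hM8]; nlinarith [sq_nonneg r]
    have : Ftilde r = F r := by rw [hFt]; exact min_eq_left hFle
    rw [this, hF, show 2 * ((1/8) * (1 - r^2)^2) = ((1 - r^2)/2)^2 by ring,
      Real.sqrt_sq (by nlinarith)]
    ring
  -- explicit value of W on [-1,1]
  have hWval : ∀ φ ∈ Set.Icc (-1:ℝ) 1, W φ = φ/2 - φ^3/6 + 1/3 := by
    intro φ hφ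
    rw [hW]
    have hsub : Set.uIcc (-1:ℝ) φ ⊆ Set.Icc (-1:ℝ) 1 := by
      rw [Set.uIcc_of_le hφ.1]
      exact Set.Icc_subset_Icc le_rfl hφ.2
    rw [integral_congr (g := fun r => 1/2 - r^2/2)
      (fun r hr => hsqrt r (hsub hr))]
    have hi1 : IntervalIntegrable (fun _ : ℝ => (1:ℝ)/2) MeasureTheory.volume (-1) φ :=
      intervalIntegrable_const
    have hi2 : IntervalIntegrable (fun r : ℝ => r^2/2) MeasureTheory.volume (-1) φ :=
      (intervalIntegrable_pow 2).div_const 2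
    rw [integral_sub hi1 hi2]
    simp only [integral_div, integral_pow, integral_one]
    ring
  intro φ₁ h1 φ₂ h2
  rw [hWval φ₁ h1, hWval φ₂ h2]
  obtain ⟨ha1, ha2⟩ := h1
  obtain ⟨hb1, hb2⟩ := h2
  rcases le_total φ₁ φ₂ with h | h
  · rw [abs_of_nonpos (by nlinarith [mul_nonneg (sub_nonneg.2 h) (mul_nonneg (sub_nonneg.2 ha2) (by linarith : (0:ℝ) ≤ 1 + φ₁)), mul_nonneg (sub_nonneg.2 h) (mul_nonneg (sub_nonneg.2 hb2) (by linarith : (0:ℝ) ≤ 1 + φ₂))])]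
    nlinarith [mul_nonneg (sub_nonneg.2 h) (mul_nonneg (sub_nonneg.2 ha2) (by linarith : (0:ℝ) ≤ 1 + φ₁)), mul_nonneg (sub_nonneg.2 h) (mul_nonneg (sub_nonneg.2 hb2) (by linarith : (0:ℝ) ≤ 1 + φ₂)), sq_nonneg (φ₁ + φ₂), sq_nonneg (φ₁ - φ₂), mul_nonneg (sub_nonneg.2 h) (sq_nonneg (φ₁ + φ₂)), mul_nonneg (sub_nonneg.2 h) (sq_nonneg (φ₁ - φ₂))]
  · rw [abs_of_nonneg (by nlinarith [mul_nonneg (sub_nonneg.2 h) (mul_nonneg (sub_nonneg.2 hb2) (by linarith : (0:ℝ) ≤ 1 + φ₂)), mul_nonneg (sub_nonneg.2 h) (mul_nonneg (sub_nonneg.2 ha2) (by linarith : (0:ℝ) ≤ 1 + φ₁))])]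
    nlinarith [mul_nonneg (sub_nonneg.2 h) (mul_nonneg (sub_nonneg.2 hb2) (by linarith : (0:ℝ) ≤ 1 + φ₂)), mul_nonneg (sub_nonneg.2 h) (mul_nonneg (sub_nonneg.2 ha2) (by linarith : (0:ℝ) ≤ 1 + φ₁)), sq_nonneg (φ₁ + φ₂), sq_nonneg (φ₁ - φ₂), mul_nonneg (sub_nonneg.2 h) (sq_nonneg (φ₁ + φ₂)), mul_nonneg (sub_nonneg.2 h) (sq_nonneg (φ₁ - φ₂))]
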